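/- Explicit minimizer of the hard-instance local objective: for d ≥ 1, the function f : ℝ^d → ℝ defined by f(θ) = Σ_{i=1}^{d} θ_i² − Σ_{i=1}^{d−1} θ_i·θ_{i+1} − θ_1 is strictly convex and attains its unique global minimum at the point θ* with coordinates θ*_i = 1 − i/(d+1) for i = 1, …, d. -/

import Mathlib

open Finset

/-- extension of a `Fin d` vector to `ℕ` by zero -/
private def extv (d : ℕ) (θ : Fin d → ℝ) : ℕ → ℝ :=
  fun i => if h : i < d then θ ⟨i, h⟩ else 0

/-- the quadratic form `∑ a i ^ 2 - ∑ a i * a (i+1)` -/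
private def Qn (d : ℕ) (a : ℕ → ℝ) : ℝ :=
  (∑ i ∈ range d, a i ^ 2) - ∑ i ∈ range (d - 1), a i * a (i + 1)

/-- the associated bilinear form -/
private def Bn (d : ℕ) (a b : ℕ → ℝ) : ℝ :=
  (∑ i ∈ range d, 2 * a i * b i)
    - ∑ i ∈ range (d - 1), (a i * b (i + 1) + a (i + 1) * b i)

private lemma pol (d : ℕ) (hd : 1 ≤ d) (a b : ℕ → ℝ) :
    Bn d a b = a 0 * b 0 + a (d - 1) * b (d - 1)
      + ∑ i ∈ range (d - 1), (a i - a (i + 1)) * (b i - b (i + 1)) := by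
  induction d, hd using Nat.le_induction with
  | base => simp [Bn]; ring
  | succ n hn ih =>
    obtain ⟨m, rfl⟩ : ∃ m, n = m + 1 := ⟨n - 1, (Nat.succ_pred_eq_of_pos hn).symm⟩
    simp only [Bn, Nat.add_sub_cancel] at ih ⊢
    rw [sum_range_succ (fun i => 2 * a i * b i) (m + 1),
      sum_range_succ (fun i => a i * b (i + 1) + a (i + 1) * b i) m,
      sum_range_succ (fun i => (a i - a (i + 1)) * (b i - b (i + 1))) m]
    linear_combination ih

private lemma Bn_self (d : ℕ) (a : ℕ → ℝ) : Bn d a a = 2 * Qn d a := by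
  simp only [Bn, Qn]
  have h1 : ∑ i ∈ range d, 2 * a i * a i = 2 * ∑ i ∈ range d, a i ^ 2 := by
    rw [mul_sum]; exact sum_congr rfl fun i _ => by ring
  have h2 : ∑ i ∈ range (d - 1), (a i * a (i + 1) + a (i + 1) * a i)
      = 2 * ∑ i ∈ range (d - 1), a i * a (i + 1) := by
    rw [mul_sum]; exact sum_congr rfl fun i _ => by ring
  rw [h1, h2]; ring

private lemma Qn_combo (d : ℕ) (t s : ℝ) (a b : ℕ → ℝ) :
    Qn d (fun i => t * a i + s * b i)
      = t ^ 2 * Qn d a + s ^ 2 * Qn d b + t * s * Bn d a b := by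
  simp only [Qn, Bn]
  have h1 : ∑ i ∈ range d, (t * a i + s * b i) ^ 2
      = t ^ 2 * ∑ i ∈ range d, a i ^ 2 + s ^ 2 * ∑ i ∈ range d, b i ^ 2
        + t * s * ∑ i ∈ range d, 2 * a i * b i := by
    rw [mul_sum, mul_sum, mul_sum, ← sum_add_distrib, ← sum_add_distrib]
    exact sum_congr rfl fun i _ => by ring
  have h2 : ∑ i ∈ range (d - 1), (t * a i + s * b i) * (t * a (i+1) + s * b (i+1))
      = t ^ 2 * ∑ i ∈ range (d - 1), a i * a (i + 1)
        + s ^ 2 * ∑ i ∈ range (d - 1), b i * b (i + 1)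
        + t * s * ∑ i ∈ range (d - 1), (a i * b (i + 1) + a (i + 1) * b i) := by
    rw [mul_sum, mul_sum, mul_sum, ← sum_add_distrib, ← sum_add_distrib]
    exact sum_congr rfl fun i _ => by ring
  rw [h1, h2]; ring

private lemma Qn_pos (d : ℕ) (hd : 1 ≤ d) (a : ℕ → ℝ) (i0 : ℕ) (hi0 : i0 < d)
    (ha : a i0 ≠ 0) : 0 < Qn d a := by
  have h2 : 2 * Qn d a = a 0 * a 0 + a (d - 1) * a (d - 1)
      + ∑ i ∈ range (d - 1), (a i - a (i + 1)) * (a i - a (i + 1)) := by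
    rw [← Bn_self, pol d hd]
  have hsn : (0:ℝ) ≤ ∑ i ∈ range (d - 1), (a i - a (i + 1)) * (a i - a (i + 1)) :=
    sum_nonneg fun i _ => mul_self_nonneg _
  have hQ0 : 0 ≤ Qn d a := by
    nlinarith [mul_self_nonneg (a 0), mul_self_nonneg (a (d - 1))]
  rcases hQ0.lt_or_eq with h | h
  · exact h
  · exfalso
    have hz : a 0 * a 0 + a (d - 1) * a (d - 1)
        + ∑ i ∈ range (d - 1), (a i - a (i + 1)) * (a i - a (i + 1)) = 0 := by
      rw [← h2, ← h]; ring
    have ha0 : a 0 = 0 := by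
      nlinarith [mul_self_nonneg (a 0), mul_self_nonneg (a (d - 1))]
    have hS : ∑ i ∈ range (d - 1), (a i - a (i + 1)) * (a i - a (i + 1)) = 0 := by
      nlinarith [mul_self_nonneg (a 0), mul_self_nonneg (a (d - 1))]
    have hdiff : ∀ i < d - 1, a i = a (i + 1) := by
      intro i hi
      have := (sum_eq_zero_iff_of_nonneg (fun j _ => mul_self_nonneg _)).mp hS i
        (mem_range.mpr hi)
      have := mul_self_eq_zero.mp this
      linarith [sub_eq_zero.mp this]
    have key : ∀ i, i < d → a i = 0 := by
      intro i
      induction i with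
      | zero => intro _; exact ha0
      | succ n ih =>
        intro hlt
        have hn : n < d - 1 := by omega
        rw [← hdiff n hn]
        exact ih (by omega)
    exact ha (key i0 hi0)

private lemma Bstar (d : ℕ) (hd : 1 ≤ d) (as b : ℕ → ℝ)
    (has : ∀ i < d, as i = 1 - ((i : ℝ) + 1) / (d + 1)) :
    Bn d as b = b 0 := by
  have hd1 : (0:ℝ) < (d : ℝ) + 1 := by positivity
  have h0 : as 0 = 1 - 1 / ((d:ℝ) + 1) := by
    rw [has 0 hd]; norm_num
  have hcast : ((d - 1 : ℕ) : ℝ) = (d : ℝ) - 1 := by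
    push_cast [Nat.cast_sub hd]; ring
  have hlast : as (d - 1) = 1 / ((d:ℝ) + 1) := by
    rw [has (d - 1) (by omega), hcast]
    field_simp
    ring
  have hsum : ∑ i ∈ range (d - 1), (as i - as (i + 1)) * (b i - b (i + 1))
      = (1 / ((d:ℝ) + 1)) * (b 0 - b (d - 1)) := by
    have hc : ∀ i ∈ range (d - 1),
        (as i - as (i + 1)) * (b i - b (i + 1))
          = (1 / ((d:ℝ) + 1)) * (b i - b (i + 1)) := by
      intro i hi
      have hi' : i < d - 1 := mem_range.mp hi
      rw [has i (by omega), has (i + 1) (by omega)]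
      push_cast
      field_simp
      ring
    rw [sum_congr rfl hc, ← mul_sum, Finset.sum_range_sub' b (d - 1)]
  rw [pol d hd, h0, hlast, hsum]
  field_simp
  ring

private lemma extv_apply (d : ℕ) (θ : Fin d → ℝ) (i : Fin d) :
    extv d θ (i : ℕ) = θ i := by
  simp [extv, i.isLt]

theorem hard_instance_unique_minimizer
    (d : ℕ) (hd : 1 ≤ d)
    (f : (Fin d → ℝ) → ℝ)
    (hf : ∀ θ, f θ = ∑ i, (θ i) ^ 2
        - ∑ i : Fin d, (if h : (i : ℕ) + 1 < d then θ i * θ ⟨(i : ℕ) + 1, h⟩ else 0)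
        - θ ⟨0, hd⟩)
    (θstar : Fin d → ℝ)
    (hθstar : ∀ i : Fin d, θstar i = 1 - ((i : ℕ) + 1 : ℝ) / (d + 1)) :
    StrictConvexOn ℝ Set.univ f
    ∧ ∀ θ : Fin d → ℝ, θ ≠ θstar → f θstar < f θ := by
  have hd0 : 0 < d := hd
  -- f in terms of Qn
  have hfQ : ∀ θ : Fin d → ℝ, f θ = Qn d (extv d θ) - extv d θ 0 := by
    intro θ
    have h1 : ∑ i : Fin d, (θ i) ^ 2 = ∑ i ∈ range d, extv d θ i ^ 2 := by
      rw [← Fin.sum_univ_eq_sum_range (fun i => extv d θ i ^ 2) d]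
      exact Finset.sum_congr rfl fun i _ => by rw [extv_apply]
    have h2 : ∑ i : Fin d, (if h : (i : ℕ) + 1 < d then θ i * θ ⟨(i : ℕ) + 1, h⟩ else 0)
        = ∑ i ∈ range (d - 1), extv d θ i * extv d θ (i + 1) := by
      have e1 : ∑ i : Fin d, (if h : (i : ℕ) + 1 < d then θ i * θ ⟨(i : ℕ) + 1, h⟩ else 0)
          = ∑ i ∈ range d,
              (if h : i + 1 < d then extv d θ i * extv d θ (i + 1) else 0) := by
        rw [← Fin.sum_univ_eq_sum_range
            (fun i => if h : i + 1 < d then extv d θ i * extv d θ (i + 1) else 0) d]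
        refine Finset.sum_congr rfl fun i _ => ?_
        by_cases h : (i : ℕ) + 1 < d <;> simp [h, extv, i.isLt]
      rw [e1, ← Finset.sum_subset (Finset.range_subset_range.mpr (Nat.sub_le d 1))
        (fun x hxd hx => dif_neg
          (by simp only [Finset.mem_range, not_lt] at hxd hx; omega))]
      exact Finset.sum_congr rfl fun i hi => dif_pos (by
        have := Finset.mem_range.mp hi; omega)
    have h3 : extv d θ 0 = θ ⟨0, hd⟩ := by simp [extv, hd0]
    rw [hf θ, h1, h2, h3, Qn]
  -- the star point as a ℕ-indexed vector
  set as : ℕ → ℝ := extv d θstar with has_def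
  have has : ∀ i < d, as i = 1 - ((i : ℝ) + 1) / (d + 1) := by
    intro i h
    simp only [has_def, extv, dif_pos h]
    rw [hθstar ⟨i, h⟩]
  -- expansion around θstar
  have hmin : ∀ θ : Fin d → ℝ, f θ = f θstar + Qn d (extv d (θ - θstar)) := by
    intro θ
    rw [hfQ θ, hfQ θstar]
    have e : extv d θ = fun i => 1 * extv d θstar i + 1 * extv d (θ - θstar) i := by
      funext i
      by_cases h : i < d
      · simp only [extv, dif_pos h, Pi.sub_apply]; ring
      · simp [extv, dif_neg h]
    rw [e, Qn_combo]
    have hB := Bstar d hd as (extv d (θ - θstar)) has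
    have h0 : extv d θ 0 = extv d θstar 0 + extv d (θ - θstar) 0 := by
      simp only [extv, dif_pos hd0, Pi.sub_apply]; ring
    linear_combination hB
  constructor
  · refine ⟨convex_univ, fun x _ y _ hxy t s ht hs hts => ?_⟩
    have emix : extv d (t • x + s • y)
        = fun i => t * extv d x i + s * extv d y i := by
      funext i
      by_cases h : i < d
      · simp [extv, dif_pos h]
      · simp [extv, dif_neg h]
    have hdiff : (fun i => 1 * extv d x i + (-1) * extv d y i) = extv d (x - y) := by
      funext i
      by_cases h : i < d
      · simp only [extv, dif_pos h, Pi.sub_apply]; ring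
      · simp [extv, dif_neg h]
    have hcombo := Qn_combo d 1 (-1) (extv d x) (extv d y)
    rw [hdiff] at hcombo
    obtain ⟨i, hi⟩ := Function.ne_iff.mp hxy
    have hne : extv d (x - y) (i : ℕ) ≠ 0 := by
      rw [extv_apply]; exact sub_ne_zero.mpr hi
    have hpos : 0 < Qn d (extv d (x - y)) := Qn_pos d hd _ i i.isLt hne
    have hkey : t * f x + s * f y - f (t • x + s • y)
        = t * s * Qn d (extv d (x - y)) := by
      rw [hfQ x, hfQ y, hfQ (t • x + s • y), emix, Qn_combo]
      linear_combination (-(t * s)) * hcombo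
        - (t * Qn d (extv d x) + s * Qn d (extv d y)) * hts
    have : 0 < t * s * Qn d (extv d (x - y)) := mul_pos (mul_pos ht hs) hpos
    simp only [smul_eq_mul]
    linarith
  · intro θ hθ
    rw [hmin θ]
    obtain ⟨i, hi⟩ := Function.ne_iff.mp hθ
    have hne : extv d (θ - θstar) (i : ℕ) ≠ 0 := by
      rw [extv_apply]; exact sub_ne_zero.mpr hi
    have hpos : 0 < Qn d (extv d (θ - θstar)) := Qn_pos d hd _ i i.isLt hne
    linarith
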